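/- Let X ⊆ ℝ^n and Y ⊆ ℝ^m be nonempty compact sets, let F : X×Y → ℝ, c : X → ℝ^{ñ}, d : X×Y → ℝ^{m̃} be continuous, and define F_low = min_{X×Y} F and d_hi = max{‖d(x,y)‖ : (x,y) ∈ X×Y}. Let L(x,y,λx,λy;ρ) = F(x,y) + (‖[λx + ρc(x)]_+‖² − ‖λx‖²)/(2ρ) − (‖[λy + ρd(x,y)]_+‖² − ‖λy‖²)/(2ρ). Then for every ρ > 0, λx ∈ ℝ^{ñ}, and λy ∈ ℝ^{m̃} with λy ≥ 0 componentwise, and for all (x,y) ∈ X×Y: L(x,y,λx,λy;ρ) ≥ F_low − ‖λx‖²/(2ρ) − ρ^{-1}‖λy‖² − ρ·d_hi². -/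

import Mathlib

/-- Componentwise positive part `[v]₊` of a vector. -/
noncomputable def posPart {k : ℕ} (v : EuclideanSpace ℝ (Fin k)) : EuclideanSpace ℝ (Fin k) :=
  WithLp.toLp 2 (fun i => max (v i) 0)

lemma norm_posPart_le {k : ℕ} (v : EuclideanSpace ℝ (Fin k)) : ‖posPart v‖ ≤ ‖v‖ := by
  rw [EuclideanSpace.norm_eq, EuclideanSpace.norm_eq]
  apply Real.sqrt_le_sqrt
  apply Finset.sum_le_sum
  intro i _
  have : posPart v i = max (v i) 0 := rfl
  rw [this, Real.norm_eq_abs, Real.norm_eq_abs]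
  rcases le_or_gt (v i) 0 with h | h
  · simp [max_eq_right h]; positivity
  · rw [max_eq_left h.le]

/-- Uniform lower bound for the augmented Lagrangian over `X × Y`:
`L(x,y,λx,λy;ρ) ≥ F_low − ‖λx‖²/(2ρ) − ρ⁻¹‖λy‖² − ρ d_hi²`. -/
theorem aug_lagrangian_lower_bound {n m nt mt : ℕ}
    (X : Set (EuclideanSpace ℝ (Fin n))) (Y : Set (EuclideanSpace ℝ (Fin m)))
    (hXne : X.Nonempty) (hXcp : IsCompact X)
    (hYne : Y.Nonempty) (hYcp : IsCompact Y)
    (F : EuclideanSpace ℝ (Fin n) → EuclideanSpace ℝ (Fin m) → ℝ)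
    (hFcont : ContinuousOn
      (fun u : (EuclideanSpace ℝ (Fin n)) × (EuclideanSpace ℝ (Fin m)) => F u.1 u.2) (X ×ˢ Y))
    (c : EuclideanSpace ℝ (Fin n) → EuclideanSpace ℝ (Fin nt))
    (hccont : ContinuousOn c X)
    (d : EuclideanSpace ℝ (Fin n) → EuclideanSpace ℝ (Fin m) → EuclideanSpace ℝ (Fin mt))
    (hdcont : ContinuousOn
      (fun u : (EuclideanSpace ℝ (Fin n)) × (EuclideanSpace ℝ (Fin m)) => d u.1 u.2) (X ×ˢ Y)) :
    ∀ ρ : ℝ, 0 < ρ →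
    ∀ lx : EuclideanSpace ℝ (Fin nt),
    ∀ ly : EuclideanSpace ℝ (Fin mt), (∀ i, 0 ≤ ly i) →
    ∀ x ∈ X, ∀ y ∈ Y,
      sInf ((fun u : (EuclideanSpace ℝ (Fin n)) × (EuclideanSpace ℝ (Fin m)) =>
            F u.1 u.2) '' (X ×ˢ Y))
          - ‖lx‖ ^ 2 / (2 * ρ) - ρ⁻¹ * ‖ly‖ ^ 2
          - ρ * (sSup ((fun u : (EuclideanSpace ℝ (Fin n)) × (EuclideanSpace ℝ (Fin m)) =>
              ‖d u.1 u.2‖) '' (X ×ˢ Y))) ^ 2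
        ≤ F x y + (‖posPart (lx + ρ • c x)‖ ^ 2 - ‖lx‖ ^ 2) / (2 * ρ)
          - (‖posPart (ly + ρ • d x y)‖ ^ 2 - ‖ly‖ ^ 2) / (2 * ρ) := by
  intro ρ hρ lx ly hly x hx y hy
  have hScp : IsCompact (X ×ˢ Y) := hXcp.prod hYcp
  have hxy : (x, y) ∈ X ×ˢ Y := ⟨hx, hy⟩
  -- F lower bound
  have hFimg : IsCompact ((fun u : (EuclideanSpace ℝ (Fin n)) × (EuclideanSpace ℝ (Fin m)) =>
      F u.1 u.2) '' (X ×ˢ Y)) := hScp.image_of_continuousOn hFcont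
  have hInf : sInf ((fun u : (EuclideanSpace ℝ (Fin n)) × (EuclideanSpace ℝ (Fin m)) =>
      F u.1 u.2) '' (X ×ˢ Y)) ≤ F x y :=
    csInf_le hFimg.bddBelow ⟨(x, y), hxy, rfl⟩
  -- d upper bound
  have hdimg : IsCompact ((fun u : (EuclideanSpace ℝ (Fin n)) × (EuclideanSpace ℝ (Fin m)) =>
      ‖d u.1 u.2‖) '' (X ×ˢ Y)) := hScp.image_of_continuousOn hdcont.norm
  set D := sSup ((fun u : (EuclideanSpace ℝ (Fin n)) × (EuclideanSpace ℝ (Fin m)) =>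
      ‖d u.1 u.2‖) '' (X ×ˢ Y)) with hD
  have hDle : ‖d x y‖ ≤ D := le_csSup hdimg.bddAbove ⟨(x, y), hxy, rfl⟩
  have hDsq : ‖d x y‖ ^ 2 ≤ D ^ 2 := by
    nlinarith [norm_nonneg (d x y)]
  have h1 : (0:ℝ) ≤ ‖posPart (lx + ρ • c x)‖ ^ 2 := by positivity
  have h2 : ‖posPart (ly + ρ • d x y)‖ ≤ ‖ly + ρ • d x y‖ := norm_posPart_le _
  have h3 : ‖ly + ρ • d x y‖ ≤ ‖ly‖ + ρ * ‖d x y‖ := by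
    calc ‖ly + ρ • d x y‖ ≤ ‖ly‖ + ‖ρ • d x y‖ := norm_add_le _ _
    _ = ‖ly‖ + ρ * ‖d x y‖ := by rw [norm_smul, Real.norm_eq_abs, abs_of_pos hρ]
  have hP2 : ‖posPart (ly + ρ • d x y)‖ ^ 2 ≤ 2 * ‖ly‖ ^ 2 + 2 * ρ ^ 2 * D ^ 2 := by
    nlinarith [norm_nonneg (posPart (ly + ρ • d x y)), norm_nonneg ly, norm_nonneg (d x y),
      norm_nonneg (ly + ρ • d x y), h2, h3, hDsq, sq_nonneg (‖ly‖ - ρ * ‖d x y‖)]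
  have h2ρ : (0:ℝ) < 2 * ρ := by linarith
  have hinv : (2 * ρ)⁻¹ * (2 * ρ) = 1 := inv_mul_cancel₀ (ne_of_gt h2ρ)
  have hinvρ : ρ⁻¹ * ρ = 1 := inv_mul_cancel₀ (ne_of_gt hρ)
  have hinvpos : (0:ℝ) < (2 * ρ)⁻¹ := inv_pos.mpr h2ρ
  have hinvρpos : (0:ℝ) < ρ⁻¹ := inv_pos.mpr hρ
  rw [div_eq_mul_inv, div_eq_mul_inv, div_eq_mul_inv]
  nlinarith [hInf, hP2, h1, mul_le_mul_of_nonneg_right hP2 hinvpos.le,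
    mul_le_mul_of_nonneg_right h1 hinvpos.le, sq_nonneg ‖ly‖, sq_nonneg D,
    mul_pos hρ hinvpos]
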